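/- Let G_m be the (m × m)-grid and let S be a subset of the vertices of the central (m - 2ℓ) × (m - 2ℓ)-subgrid of G_m, where ℓ = ⌊|S|^{1/4}⌋. Then G_m contains the (ℓ × ℓ)-grid as an S-rooted minor. -/

import Mathlib

/-- `H` is a minor of `G`, witnessed by a minor model: a family of nonempty, pairwise
disjoint, connected branch sets, one per vertex of `H`, with edges of `H` realized by
edges of `G` between the corresponding branch sets. -/
def IsGraphMinor {W V : Type*} (H : SimpleGraph W) (G : SimpleGraph V) : Prop :=
  ∃ S : W → Set V,
    (∀ w, (S w).Nonempty) ∧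
    (∀ w, (G.induce (S w)).Connected) ∧
    (∀ w w', w ≠ w' → Disjoint (S w) (S w')) ∧
    (∀ w w', H.Adj w w' → ∃ x ∈ S w, ∃ y ∈ S w', G.Adj x y)

/-- The `(k × k)`-grid: vertices `[k] × [k]`, edges between pairs at `ℓ₁`-distance `1`. -/
def gridGraph (k : ℕ) : SimpleGraph (Fin k × Fin k) :=
  SimpleGraph.fromRel (fun a b => Nat.dist a.1.val b.1.val + Nat.dist a.2.val b.2.val = 1)

/-- `G` contains `H` as an `X`-rooted minor: a minor model in which every branch set
meets `X`. -/
def HasRootedMinor {V W : Type*} (G : SimpleGraph V) (X : Set V) (H : SimpleGraph W) : Prop :=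
  ∃ S : W → Set V,
    (∀ w, (S w ∩ X).Nonempty) ∧
    (∀ w, (G.induce (S w)).Connected) ∧
    (∀ w w', w ≠ w' → Disjoint (S w) (S w')) ∧
    (∀ w w', H.Adj w w' → ∃ x ∈ S w, ∃ y ∈ S w', G.Adj x y)

/-- The bidimensionality of `X` in `G`: the maximum `ℓ` such that `G` contains the
`(ℓ × ℓ)`-grid as an `X`-rooted minor. -/
noncomputable def bidim {V : Type*} (G : SimpleGraph V) (X : Set V) : ℕ :=
  sSup {ℓ : ℕ | HasRootedMinor G X (gridGraph ℓ)}

/-- A graph parameter: a function assigning a natural number to every (simple) graph. -/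
def GraphParam : Type 1 := {V : Type} → SimpleGraph V → ℕ

/-- A graph parameter is minor-monotone if it does not increase when passing to minors. -/
def MinorMonotone (p : GraphParam) : Prop :=
  ∀ {V W : Type} (G : SimpleGraph V) (H : SimpleGraph W), IsGraphMinor H G → p H ≤ p G

/-- A graph parameter is isomorphism-invariant. -/
def IsoInvariant (p : GraphParam) : Prop :=
  ∀ {V W : Type} (G : SimpleGraph V) (H : SimpleGraph W), Nonempty (G ≃g H) → p G = p H

namespace GridAux

open SimpleGraph

lemma grid_adj_iff {m : ℕ} (p q : Fin m × Fin m) :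
    (gridGraph m).Adj p q ↔ p ≠ q ∧ Nat.dist p.1.val q.1.val + Nat.dist p.2.val q.2.val = 1 := by
  unfold gridGraph
  rw [SimpleGraph.fromRel_adj]
  constructor
  · rintro ⟨h1, h2 | h2⟩
    · exact ⟨h1, h2⟩
    · refine ⟨h1, ?_⟩
      rw [Nat.dist_comm p.1.val q.1.val, Nat.dist_comm p.2.val q.2.val]
      exact h2
  · rintro ⟨h1, h2⟩
    exact ⟨h1, Or.inl h2⟩

lemma adj_right {m : ℕ} {p q : Fin m × Fin m} (h1 : p.1 = q.1) (h2 : (p.2 : ℕ) + 1 = (q.2 : ℕ)) :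
    (gridGraph m).Adj p q := by
  rw [grid_adj_iff]
  constructor
  · intro he
    rw [he] at h2; omega
  · rw [h1, Nat.dist_self]
    simp [Nat.dist]
    omega

lemma adj_down {m : ℕ} {p q : Fin m × Fin m} (h1 : p.2 = q.2) (h2 : (p.1 : ℕ) + 1 = (q.1 : ℕ)) :
    (gridGraph m).Adj p q := by
  rw [grid_adj_iff]
  constructor
  · intro he
    rw [he] at h2; omega
  · rw [h1, Nat.dist_self]
    simp [Nat.dist]
    omega

lemma induce_connected_of_measure {V : Type*} (G : SimpleGraph V) (A : Set V) (r : V)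
    (hr : r ∈ A) (μ : V → ℕ)
    (h : ∀ p ∈ A, p ≠ r → ∃ q ∈ A, G.Adj q p ∧ μ q < μ p) : (G.induce A).Connected := by
  have key : ∀ (n : ℕ) (p : V) (hp : p ∈ A), μ p ≤ n →
      (G.induce A).Reachable ⟨p, hp⟩ ⟨r, hr⟩ := by
    intro n
    induction n with
    | zero =>
      intro p hp hle
      by_cases hpr : p = r
      · rw [show (⟨p, hp⟩ : A) = ⟨r, hr⟩ from Subtype.ext hpr]
      · obtain ⟨q, hq, _, hlt⟩ := h p hp hpr
        omega
    | succ n ih =>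
      intro p hp hle
      by_cases hpr : p = r
      · rw [show (⟨p, hp⟩ : A) = ⟨r, hr⟩ from Subtype.ext hpr]
      · obtain ⟨q, hq, hadj, hlt⟩ := h p hp hpr
        have hadj' : (G.induce A).Adj ⟨p, hp⟩ ⟨q, hq⟩ := by
          simp only [SimpleGraph.induce_eq_coe_induce_top, SimpleGraph.Subgraph.coe_adj]
          exact ⟨hp, hq, hadj.symm⟩
        exact (hadj'.reachable).trans (ih q hq (by omega))
  rw [SimpleGraph.connected_iff]
  refine ⟨fun x y => ?_, ⟨⟨r, hr⟩⟩⟩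
  obtain ⟨p, hp⟩ := x
  obtain ⟨q, hq⟩ := y
  exact (key (μ p) p hp le_rfl).trans (key (μ q) q hq le_rfl).symm




/-- top row of the wire of index `k` -/
def topR (ℓ k : ℕ) : ℕ := if k / ℓ % 2 = 0 then k % ℓ else ℓ - 1 - k % ℓ
def botR (ℓ m k : ℕ) : ℕ := if k / ℓ % 2 = 0 then m - ℓ + k % ℓ else m - 1 - k % ℓ
def rowH (ℓ m k : ℕ) : ℕ := if k / ℓ % 2 = 0 then k % ℓ + 1 else m - 2 - k % ℓ
def rowB (ℓ m k : ℕ) : ℕ := if k / ℓ % 2 = 0 then k % ℓ else m - 1 - k % ℓ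
def prt (ℓ k : ℕ) : ℕ := (k / ℓ + 2) * ℓ - 1 - k % ℓ

def wire (ℓ m : ℕ) (C : ℕ → ℕ) (k : ℕ) : Set (Fin m × Fin m) :=
  {p | (p.2 : ℕ) = C k ∧ topR ℓ k ≤ (p.1 : ℕ) ∧ (p.1 : ℕ) ≤ botR ℓ m k}
def segH (ℓ m : ℕ) (C : ℕ → ℕ) (k : ℕ) : Set (Fin m × Fin m) :=
  {p | k % ℓ + 1 < ℓ ∧ (p.1 : ℕ) = rowH ℓ m k ∧ C k ≤ (p.2 : ℕ) ∧ (p.2 : ℕ) < C (k + 1)}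
def segB (ℓ m : ℕ) (C : ℕ → ℕ) (k : ℕ) : Set (Fin m × Fin m) :=
  {p | k / ℓ + 2 ≤ ℓ ∧ (p.1 : ℕ) = rowB ℓ m k ∧ C k ≤ (p.2 : ℕ) ∧ (p.2 : ℕ) < C (prt ℓ k)}
def br (ℓ m : ℕ) (C : ℕ → ℕ) (k : ℕ) : Set (Fin m × Fin m) :=
  wire ℓ m C k ∪ segH ℓ m C k ∪ segB ℓ m C k

lemma div_bounds {ℓ x A : ℕ} (hl : 0 < ℓ) (h1 : ℓ * A ≤ x) (h2 : x < ℓ * A + 2 * ℓ) :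
    x / ℓ = A ∨ x / ℓ = A + 1 := by
  have l1 : A ≤ x / ℓ := by
    rw [Nat.le_div_iff_mul_le hl]
    have : A * ℓ = ℓ * A := by ring
    omega
  have l2 : x / ℓ < A + 2 := by
    rw [Nat.div_lt_iff_lt_mul hl]
    have : (A + 2) * ℓ = ℓ * A + 2 * ℓ := by ring
    omega
  omega

lemma divmod_of_eq {ℓ x A r : ℕ} (h : x = ℓ * A + r) (hr : r < ℓ) :
    x / ℓ = A ∧ x % ℓ = r := by
  have hl : 0 < ℓ := by omega
  constructor
  · rw [h, Nat.mul_add_div hl, Nat.div_eq_of_lt hr]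
    omega
  · rw [h, Nat.mul_add_mod, Nat.mod_eq_of_lt hr]

section Disj

variable {ℓ m : ℕ} {C : ℕ → ℕ}

lemma D1 (hC : StrictMono C) {k k' : ℕ} {p : Fin m × Fin m}
    (h1 : p ∈ wire ℓ m C k) (h2 : p ∈ wire ℓ m C k') : k = k' := by
  obtain ⟨hc1, -, -⟩ := h1
  obtain ⟨hc2, -, -⟩ := h2
  exact hC.injective (by omega)

lemma D2 (hC : StrictMono C) {k k' : ℕ} {p : Fin m × Fin m}
    (h1 : p ∈ wire ℓ m C k) (h2 : p ∈ segH ℓ m C k') : k = k' := by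
  obtain ⟨hcol, -, -⟩ := h1
  obtain ⟨-, -, hc1, hc2⟩ := h2
  rw [hcol] at hc1 hc2
  have a1 : k' ≤ k := hC.le_iff_le.mp hc1
  have a2 : k < k' + 1 := hC.lt_iff_lt.mp hc2
  omega

lemma D3 (hl : 0 < ℓ) (hm : 2 * ℓ < m) (hC : StrictMono C) {k k' : ℕ} {p : Fin m × Fin m}
    (h1 : p ∈ wire ℓ m C k) (h2 : p ∈ segB ℓ m C k') : k = k' := by
  obtain ⟨hcol, hr1, hr2⟩ := h1
  obtain ⟨hA', hrow, hc1, hc2⟩ := h2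
  rw [hcol] at hc1 hc2
  have a1 : k' ≤ k := hC.le_iff_le.mp hc1
  have a2 : k < prt ℓ k' := hC.lt_iff_lt.mp hc2
  simp only [prt] at a2
  have dk := Nat.div_add_mod k ℓ
  have dk' := Nat.div_add_mod k' ℓ
  have tk : k % ℓ < ℓ := Nat.mod_lt _ hl
  have tk' : k' % ℓ < ℓ := Nat.mod_lt _ hl
  have hq : (k' / ℓ + 2) * ℓ = ℓ * (k' / ℓ) + 2 * ℓ := by ring
  have hblock : k / ℓ = k' / ℓ ∨ k / ℓ = k' / ℓ + 1 := div_bounds hl (by omega) (by omega)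
  have hid : ℓ * (k' / ℓ + 1) = ℓ * (k' / ℓ) + ℓ := by ring
  rcases Nat.even_or_odd (k' / ℓ) with hpar | hpar
  · have hp' : k' / ℓ % 2 = 0 := Nat.even_iff.mp hpar
    rcases hblock with hb | hb
    · have hp : k / ℓ % 2 = 0 := by omega
      rw [show topR ℓ k = k % ℓ from if_pos hp] at hr1
      rw [show rowB ℓ m k' = k' % ℓ from if_pos hp'] at hrow
      rw [hb] at dk
      omega
    · have hp : k / ℓ % 2 = 1 := by omega
      rw [show topR ℓ k = ℓ - 1 - k % ℓ from if_neg (by omega)] at hr1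
      rw [show rowB ℓ m k' = k' % ℓ from if_pos hp'] at hrow
      rw [hb] at dk
      omega
  · have hp' : k' / ℓ % 2 = 1 := Nat.odd_iff.mp hpar
    rcases hblock with hb | hb
    · have hp : k / ℓ % 2 = 1 := by omega
      rw [show botR ℓ m k = m - 1 - k % ℓ from if_neg (by omega)] at hr2
      rw [show rowB ℓ m k' = m - 1 - k' % ℓ from if_neg (by omega)] at hrow
      rw [hb] at dk
      omega
    · have hp : k / ℓ % 2 = 0 := by omega
      rw [show botR ℓ m k = m - ℓ + k % ℓ from if_pos hp] at hr2
      rw [show rowB ℓ m k' = m - 1 - k' % ℓ from if_neg (by omega)] at hrow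
      rw [hb] at dk
      omega

lemma D4 (hC : StrictMono C) {k k' : ℕ} {p : Fin m × Fin m} (hne : k ≠ k')
    (h1 : p ∈ segH ℓ m C k) (h2 : p ∈ segH ℓ m C k') : False := by
  obtain ⟨-, -, hc1, hc2⟩ := h1
  obtain ⟨-, -, hc1', hc2'⟩ := h2
  have a1 : k' < k + 1 := hC.lt_iff_lt.mp (by omega)
  have a2 : k < k' + 1 := hC.lt_iff_lt.mp (by omega)
  omega

lemma D5 (hl : 0 < ℓ) (hm : 2 * ℓ < m) (hC : StrictMono C) {k k' : ℕ} {p : Fin m × Fin m}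
    (h1 : p ∈ segH ℓ m C k) (h2 : p ∈ segB ℓ m C k') : False := by
  obtain ⟨hTk, hrowk, hc1, hc2⟩ := h1
  obtain ⟨hA', hrow', hc1', hc2'⟩ := h2
  have a1 : k' < k + 1 := hC.lt_iff_lt.mp (by omega)
  have a2 : k < prt ℓ k' := hC.lt_iff_lt.mp (by omega)
  simp only [prt] at a2
  have dk := Nat.div_add_mod k ℓ
  have dk' := Nat.div_add_mod k' ℓ
  have tk : k % ℓ < ℓ := Nat.mod_lt _ hl
  have tk' : k' % ℓ < ℓ := Nat.mod_lt _ hl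
  have hq : (k' / ℓ + 2) * ℓ = ℓ * (k' / ℓ) + 2 * ℓ := by ring
  have hblock : k / ℓ = k' / ℓ ∨ k / ℓ = k' / ℓ + 1 := div_bounds hl (by omega) (by omega)
  have hid : ℓ * (k' / ℓ + 1) = ℓ * (k' / ℓ) + ℓ := by ring
  rcases Nat.even_or_odd (k' / ℓ) with hpar | hpar
  · have hp' : k' / ℓ % 2 = 0 := Nat.even_iff.mp hpar
    rw [show rowB ℓ m k' = k' % ℓ from if_pos hp'] at hrow'
    rcases hblock with hb | hb
    · have hp : k / ℓ % 2 = 0 := by omega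
      rw [show rowH ℓ m k = k % ℓ + 1 from if_pos hp] at hrowk
      rw [hb] at dk
      omega
    · have hp : k / ℓ % 2 = 1 := by omega
      rw [show rowH ℓ m k = m - 2 - k % ℓ from if_neg (by omega)] at hrowk
      rw [hb] at dk
      omega
  · have hp' : k' / ℓ % 2 = 1 := Nat.odd_iff.mp hpar
    rw [show rowB ℓ m k' = m - 1 - k' % ℓ from if_neg (by omega)] at hrow'
    rcases hblock with hb | hb
    · have hp : k / ℓ % 2 = 1 := by omega
      rw [show rowH ℓ m k = m - 2 - k % ℓ from if_neg (by omega)] at hrowk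
      rw [hb] at dk
      omega
    · have hp : k / ℓ % 2 = 0 := by omega
      rw [show rowH ℓ m k = k % ℓ + 1 from if_pos hp] at hrowk
      rw [hb] at dk
      omega

lemma D6 (hl : 0 < ℓ) (hm : 2 * ℓ < m) (hC : StrictMono C) {k k' : ℕ} {p : Fin m × Fin m}
    (hlt : k < k') (h1 : p ∈ segB ℓ m C k) (h2 : p ∈ segB ℓ m C k') : False := by
  obtain ⟨hAk, hrow, hc1, hc2⟩ := h1
  obtain ⟨hAk', hrow', hc1', hc2'⟩ := h2
  have a2 : k' < prt ℓ k := hC.lt_iff_lt.mp (by omega)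
  simp only [prt] at a2
  have dk := Nat.div_add_mod k ℓ
  have dk' := Nat.div_add_mod k' ℓ
  have tk : k % ℓ < ℓ := Nat.mod_lt _ hl
  have tk' : k' % ℓ < ℓ := Nat.mod_lt _ hl
  have hq : (k / ℓ + 2) * ℓ = ℓ * (k / ℓ) + 2 * ℓ := by ring
  have hblock : k' / ℓ = k / ℓ ∨ k' / ℓ = k / ℓ + 1 := div_bounds hl (by omega) (by omega)
  have hid : ℓ * (k / ℓ + 1) = ℓ * (k / ℓ) + ℓ := by ring
  rcases Nat.even_or_odd (k / ℓ) with hpar | hpar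
  · have hp : k / ℓ % 2 = 0 := Nat.even_iff.mp hpar
    rw [show rowB ℓ m k = k % ℓ from if_pos hp] at hrow
    rcases hblock with hb | hb
    · have hp' : k' / ℓ % 2 = 0 := by omega
      rw [show rowB ℓ m k' = k' % ℓ from if_pos hp'] at hrow'
      rw [hb] at dk'
      omega
    · have hp' : k' / ℓ % 2 = 1 := by omega
      rw [show rowB ℓ m k' = m - 1 - k' % ℓ from if_neg (by omega)] at hrow'
      rw [hb] at dk'
      omega
  · have hp : k / ℓ % 2 = 1 := Nat.odd_iff.mp hpar
    rw [show rowB ℓ m k = m - 1 - k % ℓ from if_neg (by omega)] at hrow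
    rcases hblock with hb | hb
    · have hp' : k' / ℓ % 2 = 1 := by omega
      rw [show rowB ℓ m k' = m - 1 - k' % ℓ from if_neg (by omega)] at hrow'
      rw [hb] at dk'
      omega
    · have hp' : k' / ℓ % 2 = 0 := by omega
      rw [show rowB ℓ m k' = k' % ℓ from if_pos hp'] at hrow'
      rw [hb] at dk'
      omega

lemma br_disjoint (hl : 0 < ℓ) (hm : 2 * ℓ < m) (hC : StrictMono C) {k k' : ℕ} (hne : k ≠ k') :
    Disjoint (br ℓ m C k) (br ℓ m C k') := by
  rw [Set.disjoint_left]
  rintro p (⟨hp | hp⟩ | hp) hq <;> rcases hq with (⟨hq | hq⟩ | hq)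
  · exact hne (D1 hC hp hq)
  · exact hne (D2 hC hp hq)
  · exact hne (D3 hl hm hC hp hq)
  · exact hne (D2 hC hq hp).symm
  · exact D4 hC hne hp hq
  · exact D5 hl hm hC hp hq
  · exact hne (D3 hl hm hC hq hp).symm
  · exact D5 hl hm hC hq hp
  · rcases Nat.lt_or_ge k k' with h | h
    · exact D6 hl hm hC h hp hq
    · exact D6 hl hm hC (by omega) hq hp

end Disj


section Build

variable {ℓ m : ℕ} {C : ℕ → ℕ}

lemma topR_le (hl : 0 < ℓ) (k : ℕ) : topR ℓ k ≤ ℓ - 1 := by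
  have tk : k % ℓ < ℓ := Nat.mod_lt _ hl
  unfold topR
  split <;> omega

lemma botR_bounds (hl : 0 < ℓ) (hm : 2 * ℓ < m) (k : ℕ) :
    m - ℓ ≤ botR ℓ m k ∧ botR ℓ m k ≤ m - 1 := by
  have tk : k % ℓ < ℓ := Nat.mod_lt _ hl
  unfold botR
  split <;> omega

lemma rowH_range (hl : 0 < ℓ) (hm : 2 * ℓ < m) {k : ℕ} (hcond : k % ℓ + 1 < ℓ) :
    topR ℓ k ≤ rowH ℓ m k ∧ rowH ℓ m k ≤ botR ℓ m k ∧ rowH ℓ m k < m := by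
  have tk : k % ℓ < ℓ := Nat.mod_lt _ hl
  unfold topR rowH botR
  split <;> omega

lemma rowB_range (hl : 0 < ℓ) (hm : 2 * ℓ < m) (k : ℕ) :
    topR ℓ k ≤ rowB ℓ m k ∧ rowB ℓ m k ≤ botR ℓ m k ∧ rowB ℓ m k < m := by
  have tk : k % ℓ < ℓ := Nat.mod_lt _ hl
  unfold topR rowB botR
  split <;> omega

lemma br_connected (hl : 0 < ℓ) (hm : 2 * ℓ < m) (hC : StrictMono C) {k : ℕ} (hCk : C k < m) :
    ((gridGraph m).induce (br ℓ m C k)).Connected := by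
  have tk : k % ℓ < ℓ := Nat.mod_lt _ hl
  have htop : topR ℓ k < m := by have := topR_le hl (k := k); omega
  set rt : Fin m × Fin m := (⟨topR ℓ k, htop⟩, ⟨C k, hCk⟩) with hrt
  have hrtmem : rt ∈ br ℓ m C k := by
    left; left
    refine ⟨rfl, le_rfl, ?_⟩
    have := botR_bounds hl hm (m := m) k
    have := topR_le hl (k := k)
    simp only [hrt]
    omega
  apply induce_connected_of_measure (gridGraph m) _ rt hrtmem
    (fun p => ((p.2 : ℕ) - C k) * m + (p.1 : ℕ))
  intro p hp hne
  have hge : C k ≤ (p.2 : ℕ) := by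
    rcases hp with (⟨hc, -, -⟩ | ⟨-, -, hc, -⟩) | ⟨-, -, hc, -⟩ <;> omega
  by_cases hcol : (p.2 : ℕ) = C k
  · have hrange : topR ℓ k ≤ (p.1 : ℕ) ∧ (p.1 : ℕ) ≤ botR ℓ m k := by
      rcases hp with (⟨-, h1, h2⟩ | ⟨hcd, h1, -, -⟩) | ⟨hcd, h1, -, -⟩
      · exact ⟨h1, h2⟩
      · rw [h1]
        have := rowH_range (m := m) hl hm hcd
        omega
      · rw [h1]
        have := rowB_range hl hm (m := m) k
        omega
    have hne1 : (p.1 : ℕ) ≠ topR ℓ k := by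
      intro h
      apply hne
      apply Prod.ext
      · exact Fin.ext h
      · exact Fin.ext hcol
    have hgt : topR ℓ k < (p.1 : ℕ) := by omega
    refine ⟨(⟨(p.1 : ℕ) - 1, by omega⟩, p.2), ?_, ?_, ?_⟩
    · left; left
      exact ⟨hcol, by simp; omega, by simp; omega⟩
    · exact adj_down rfl (by simp; omega)
    · simp only []
      omega
  · have hgt : C k < (p.2 : ℕ) := by omega
    have hmul : ((p.2 : ℕ) - 1 - C k) * m < ((p.2 : ℕ) - C k) * m :=
      Nat.mul_lt_mul_of_lt_of_le (by omega) (le_refl m) (by omega)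
    rcases hp with (⟨hc, -, -⟩ | ⟨hcd, h1, h2, h3⟩) | ⟨hcd, h1, h2, h3⟩
    · omega
    · refine ⟨(p.1, ⟨(p.2 : ℕ) - 1, by omega⟩), ?_, ?_, ?_⟩
      · left; right
        exact ⟨hcd, h1, by simp; omega, by simp; omega⟩
      · exact adj_right rfl (by simp; omega)
      · simp only []
        omega
    · refine ⟨(p.1, ⟨(p.2 : ℕ) - 1, by omega⟩), ?_, ?_, ?_⟩
      · right
        exact ⟨hcd, h1, by simp; omega, by simp; omega⟩
      · exact adj_right rfl (by simp; omega)
      · simp only []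
        omega

lemma succ_divmod (hl : 0 < ℓ) {k : ℕ} (hcond : k % ℓ + 1 < ℓ) :
    (k + 1) / ℓ = k / ℓ ∧ (k + 1) % ℓ = k % ℓ + 1 := by
  have dk := Nat.div_add_mod k ℓ
  exact divmod_of_eq (by omega) (by omega)

lemma prt_eq (hl : 0 < ℓ) (k : ℕ) :
    prt ℓ k = ℓ * (k / ℓ + 1) + (ℓ - 1 - k % ℓ) := by
  have tk : k % ℓ < ℓ := Nat.mod_lt _ hl
  have h1 : (k / ℓ + 2) * ℓ = ℓ * (k / ℓ + 1) + ℓ := by ring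
  unfold prt
  omega

lemma prt_divmod (hl : 0 < ℓ) (k : ℕ) :
    prt ℓ k / ℓ = k / ℓ + 1 ∧ prt ℓ k % ℓ = ℓ - 1 - k % ℓ := by
  have tk : k % ℓ < ℓ := Nat.mod_lt _ hl
  exact divmod_of_eq (prt_eq hl k) (by omega)

lemma prt_lt (hl : 0 < ℓ) {k : ℕ} (hcond : k / ℓ + 2 ≤ ℓ) : prt ℓ k < ℓ * ℓ := by
  have tk : k % ℓ < ℓ := Nat.mod_lt _ hl
  have h2 : ℓ * (k / ℓ + 2) ≤ ℓ * ℓ := Nat.mul_le_mul_left ℓ hcond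
  have h3 : ℓ * (k / ℓ + 2) = ℓ * (k / ℓ + 1) + ℓ := by ring
  rw [prt_eq hl k]
  omega

lemma gt_prt (hl : 0 < ℓ) (k : ℕ) : k < prt ℓ k := by
  have tk : k % ℓ < ℓ := Nat.mod_lt _ hl
  have dk := Nat.div_add_mod k ℓ
  have h3 : ℓ * (k / ℓ + 1) = ℓ * (k / ℓ) + ℓ := by ring
  rw [prt_eq hl k]
  omega

lemma succ_lt_sq (hl : 0 < ℓ) {k : ℕ} (hk : k < ℓ * ℓ) (hcond : k % ℓ + 1 < ℓ) :
    k + 1 < ℓ * ℓ := by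
  have dk := Nat.div_add_mod k ℓ
  have hdiv : k / ℓ < ℓ := by
    rw [Nat.div_lt_iff_lt_mul hl]
    have : ℓ * ℓ = ℓ * ℓ := rfl
    omega
  have h2 : ℓ * (k / ℓ + 1) ≤ ℓ * ℓ := Nat.mul_le_mul_left ℓ (by omega)
  have h3 : ℓ * (k / ℓ + 1) = ℓ * (k / ℓ) + ℓ := by ring
  omega

lemma adjH (hl : 0 < ℓ) (hm : 2 * ℓ < m) (hC : StrictMono C)
    (hCm : ∀ i, i < ℓ * ℓ → C i < m) {k : ℕ} (hk : k < ℓ * ℓ) (hcond : k % ℓ + 1 < ℓ) :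
    ∃ x ∈ br ℓ m C k, ∃ y ∈ br ℓ m C (k + 1), (gridGraph m).Adj x y := by
  have tk : k % ℓ < ℓ := Nat.mod_lt _ hl
  obtain ⟨hd1, hd2⟩ := succ_divmod hl hcond
  have hk1 : k + 1 < ℓ * ℓ := succ_lt_sq hl hk hcond
  have hCk1 : C (k + 1) < m := hCm _ hk1
  have hlt : C k < C (k + 1) := hC (by omega)
  obtain ⟨hrH1, hrH2, hrH3⟩ := rowH_range (m := m) hl hm hcond
  refine ⟨(⟨rowH ℓ m k, hrH3⟩, ⟨C (k + 1) - 1, by omega⟩), ?_,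
          (⟨rowH ℓ m k, hrH3⟩, ⟨C (k + 1), hCk1⟩), ?_, ?_⟩
  · left; right
    exact ⟨hcond, rfl, by simp; omega, by simp; omega⟩
  · left; left
    refine ⟨rfl, ?_, ?_⟩ <;>
    · simp only [topR, botR, hd1, hd2, rowH]
      split <;> omega
  · exact adj_right rfl (by simp; omega)

lemma adjB (hl : 0 < ℓ) (hm : 2 * ℓ < m) (hC : StrictMono C)
    (hCm : ∀ i, i < ℓ * ℓ → C i < m) {k : ℕ} (hk : k < ℓ * ℓ) (hcond : k / ℓ + 2 ≤ ℓ) :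
    ∃ x ∈ br ℓ m C k, ∃ y ∈ br ℓ m C (prt ℓ k), (gridGraph m).Adj x y := by
  have tk : k % ℓ < ℓ := Nat.mod_lt _ hl
  obtain ⟨hd1, hd2⟩ := prt_divmod hl k
  have hk1 : prt ℓ k < ℓ * ℓ := prt_lt hl hcond
  have hCk1 : C (prt ℓ k) < m := hCm _ hk1
  have hlt : C k < C (prt ℓ k) := hC (gt_prt hl k)
  obtain ⟨hrB1, hrB2, hrB3⟩ := rowB_range hl hm (m := m) k
  refine ⟨(⟨rowB ℓ m k, hrB3⟩, ⟨C (prt ℓ k) - 1, by omega⟩), ?_,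
          (⟨rowB ℓ m k, hrB3⟩, ⟨C (prt ℓ k), hCk1⟩), ?_, ?_⟩
  · right
    exact ⟨hcond, rfl, by simp; omega, by simp; omega⟩
  · left; left
    refine ⟨rfl, ?_, ?_⟩ <;>
    · simp only [topR, botR, rowB, hd1, hd2]
      split_ifs <;> omega
  · exact adj_right rfl (by simp; omega)

end Build

section Core

variable {ℓ m : ℕ}


def idx (ℓ : ℕ) (v : Fin ℓ × Fin ℓ) : ℕ :=
  ℓ * (v.1 : ℕ) + (if (v.1 : ℕ) % 2 = 0 then (v.2 : ℕ) else ℓ - 1 - (v.2 : ℕ))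

lemma idx_divmod (v : Fin ℓ × Fin ℓ) :
    idx ℓ v / ℓ = (v.1 : ℕ) ∧
      idx ℓ v % ℓ = (if (v.1 : ℕ) % 2 = 0 then (v.2 : ℕ) else ℓ - 1 - (v.2 : ℕ)) := by
  have hb : (v.2 : ℕ) < ℓ := v.2.isLt
  exact divmod_of_eq rfl (by split <;> omega)

lemma idx_lt (v : Fin ℓ × Fin ℓ) : idx ℓ v < ℓ * ℓ := by
  have ha : (v.1 : ℕ) < ℓ := v.1.isLt
  have hb : (v.2 : ℕ) < ℓ := v.2.isLt
  have h2 : ℓ * ((v.1 : ℕ) + 1) ≤ ℓ * ℓ := Nat.mul_le_mul_left ℓ (by omega)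
  have h3 : ℓ * ((v.1 : ℕ) + 1) = ℓ * (v.1 : ℕ) + ℓ := by ring
  unfold idx
  split <;> omega

lemma idx_inj {v v' : Fin ℓ × Fin ℓ} (h : idx ℓ v = idx ℓ v') : v = v' := by
  obtain ⟨d1, m1⟩ := idx_divmod v
  obtain ⟨d2, m2⟩ := idx_divmod v'
  rw [h] at d1 m1
  have ha : (v.1 : ℕ) = (v'.1 : ℕ) := by omega
  have hb : (v.2 : ℕ) = (v'.2 : ℕ) := by
    have h2 : (v.2 : ℕ) < ℓ := v.2.isLt
    have h2' : (v'.2 : ℕ) < ℓ := v'.2.isLt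
    rw [m2] at m1
    rw [ha] at m1
    split at m1 <;> omega
  exact Prod.ext (Fin.ext ha) (Fin.ext hb)

lemma core (hl : 0 < ℓ) (hm : 2 * ℓ < m) (c y : Fin (ℓ * ℓ) → Fin m)
    (hc : StrictMono c) (hy : ∀ k, ℓ ≤ (y k : ℕ) ∧ (y k : ℕ) < m - ℓ)
    (X : Set (Fin m × Fin m)) (hX : ∀ k, ((y k, c k) : Fin m × Fin m) ∈ X) :
    HasRootedMinor (gridGraph m) X (gridGraph ℓ) := by
  set C : ℕ → ℕ := fun i => if h : i < ℓ * ℓ then (c ⟨i, h⟩ : ℕ) else m + i with hCdef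
  have hCs : StrictMono C := by
    intro i j hij
    simp only [hCdef]
    by_cases hi : i < ℓ * ℓ
    · by_cases hj : j < ℓ * ℓ
      · rw [dif_pos hi, dif_pos hj]
        exact_mod_cast hc (show (⟨i, hi⟩ : Fin (ℓ * ℓ)) < ⟨j, hj⟩ from hij)
      · rw [dif_pos hi, dif_neg hj]
        have := (c ⟨i, hi⟩).isLt
        omega
    · rw [dif_neg hi]
      have hj : ¬ j < ℓ * ℓ := by omega
      rw [dif_neg hj]
      omega
  have hCm : ∀ i, i < ℓ * ℓ → C i < m := by
    intro i hi
    simp only [hCdef, dif_pos hi]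
    exact (c ⟨i, hi⟩).isLt
  refine ⟨fun v => br ℓ m C (idx ℓ v), ?_, ?_, ?_, ?_⟩
  · -- nonempty, meets X
    intro v
    set K : Fin (ℓ * ℓ) := ⟨idx ℓ v, idx_lt v⟩ with hK
    refine ⟨(y K, c K), ?_, hX K⟩
    left; left
    refine ⟨?_, ?_, ?_⟩
    · simp only [hCdef, dif_pos (idx_lt v)]; rfl
    · show topR ℓ (idx ℓ v) ≤ (y K : ℕ)
      have h1 := topR_le hl (idx ℓ v)
      have h2 := (hy K).1
      omega
    · show (y K : ℕ) ≤ botR ℓ m (idx ℓ v)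
      have h1 := (botR_bounds hl hm (idx ℓ v)).1
      have h2 := (hy K).2
      omega
  · intro v
    exact br_connected hl hm hCs (hCm _ (idx_lt v))
  · intro v v' hne
    exact br_disjoint hl hm hCs (fun h => hne (idx_inj h))
  · intro v v' hadj
    obtain ⟨hne, hd⟩ := (grid_adj_iff v v').mp hadj
    simp only [Nat.dist] at hd
    have hbv : (v.2 : ℕ) < ℓ := v.2.isLt
    have hbv' : (v'.2 : ℕ) < ℓ := v'.2.isLt
    have hav : (v.1 : ℕ) < ℓ := v.1.isLt
    have hav' : (v'.1 : ℕ) < ℓ := v'.1.isLt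
    have hcases : ((v.1 : ℕ) = (v'.1 : ℕ) ∧ ((v.2 : ℕ) + 1 = (v'.2 : ℕ) ∨ (v'.2 : ℕ) + 1 = (v.2 : ℕ)))
        ∨ ((v.2 : ℕ) = (v'.2 : ℕ) ∧ ((v.1 : ℕ) + 1 = (v'.1 : ℕ) ∨ (v'.1 : ℕ) + 1 = (v.1 : ℕ))) := by
      omega
    -- helper for horizontal edges
    have horiz : ∀ w w' : Fin ℓ × Fin ℓ, (w.1 : ℕ) = (w'.1 : ℕ) → (w.2 : ℕ) + 1 = (w'.2 : ℕ) →
        ∃ x ∈ br ℓ m C (idx ℓ w), ∃ z ∈ br ℓ m C (idx ℓ w'), (gridGraph m).Adj x z := by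
      intro w w' h1 h2
      have hbw : (w.2 : ℕ) < ℓ := w.2.isLt
      have hbw' : (w'.2 : ℕ) < ℓ := w'.2.isLt
      rcases Nat.even_or_odd (w.1 : ℕ) with hpar | hpar
      · have hp : (w.1 : ℕ) % 2 = 0 := Nat.even_iff.mp hpar
        have hp' : (w'.1 : ℕ) % 2 = 0 := by omega
        have f1 : idx ℓ w = ℓ * (w.1 : ℕ) + (w.2 : ℕ) := by unfold idx; rw [if_pos hp]
        have f2 : idx ℓ w' = ℓ * (w'.1 : ℕ) + (w'.2 : ℕ) := by unfold idx; rw [if_pos hp']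
        have hq : ℓ * (w.1 : ℕ) = ℓ * (w'.1 : ℕ) := by rw [h1]
        have e2 : idx ℓ w' = idx ℓ w + 1 := by rw [f1, f2]; omega
        have hmod : idx ℓ w % ℓ + 1 < ℓ := by
          have hz := (idx_divmod w).2
          rw [if_pos hp] at hz
          omega
        obtain ⟨x, hx, z, hz, hxz⟩ := adjH hl hm hCs hCm (idx_lt w) hmod
        exact ⟨x, hx, z, e2 ▸ hz, hxz⟩
      · have hp : (w.1 : ℕ) % 2 = 1 := Nat.odd_iff.mp hpar
        have hp' : (w'.1 : ℕ) % 2 = 1 := by omega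
        have f1 : idx ℓ w = ℓ * (w.1 : ℕ) + (ℓ - 1 - (w.2 : ℕ)) := by
          unfold idx; rw [if_neg (by omega)]
        have f2 : idx ℓ w' = ℓ * (w'.1 : ℕ) + (ℓ - 1 - (w'.2 : ℕ)) := by
          unfold idx; rw [if_neg (by omega)]
        have hq : ℓ * (w.1 : ℕ) = ℓ * (w'.1 : ℕ) := by rw [h1]
        have e2 : idx ℓ w = idx ℓ w' + 1 := by rw [f1, f2]; omega
        have hmod : idx ℓ w' % ℓ + 1 < ℓ := by
          have hz := (idx_divmod w').2
          rw [if_neg (by omega)] at hz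
          omega
        obtain ⟨x, hx, z, hz, hxz⟩ := adjH hl hm hCs hCm (idx_lt w') hmod
        exact ⟨z, e2 ▸ hz, x, hx, hxz.symm⟩
    have vert : ∀ w w' : Fin ℓ × Fin ℓ, (w.2 : ℕ) = (w'.2 : ℕ) → (w.1 : ℕ) + 1 = (w'.1 : ℕ) →
        ∃ x ∈ br ℓ m C (idx ℓ w), ∃ z ∈ br ℓ m C (idx ℓ w'), (gridGraph m).Adj x z := by
      intro w w' h1 h2
      have hbw : (w.2 : ℕ) < ℓ := w.2.isLt
      have hbw' : (w'.2 : ℕ) < ℓ := w'.2.isLt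
      have haw' : (w'.1 : ℕ) < ℓ := w'.1.isLt
      have hdiv : idx ℓ w / ℓ = (w.1 : ℕ) := (idx_divmod w).1
      have hcond : idx ℓ w / ℓ + 2 ≤ ℓ := by omega
      have e2 : prt ℓ (idx ℓ w) = idx ℓ w' := by
        rw [prt_eq hl, hdiv, (idx_divmod w).2]
        have hq : ℓ * ((w.1 : ℕ) + 1) = ℓ * (w'.1 : ℕ) := by rw [h2]
        rcases Nat.even_or_odd (w.1 : ℕ) with hpar | hpar
        · have hp : (w.1 : ℕ) % 2 = 0 := Nat.even_iff.mp hpar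
          have hp' : (w'.1 : ℕ) % 2 = 1 := by omega
          have f2 : idx ℓ w' = ℓ * (w'.1 : ℕ) + (ℓ - 1 - (w'.2 : ℕ)) := by
            unfold idx; rw [if_neg (by omega)]
          rw [if_pos hp, f2]
          omega
        · have hp : (w.1 : ℕ) % 2 = 1 := Nat.odd_iff.mp hpar
          have hp' : (w'.1 : ℕ) % 2 = 0 := by omega
          have f2 : idx ℓ w' = ℓ * (w'.1 : ℕ) + (w'.2 : ℕ) := by
            unfold idx; rw [if_pos hp']
          rw [if_neg (by omega), f2]
          omega
      obtain ⟨x, hx, z, hz, hxz⟩ := adjB hl hm hCs hCm (idx_lt w) hcond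
      exact ⟨x, hx, z, e2 ▸ hz, hxz⟩
    rcases hcases with ⟨h1, h2 | h2⟩ | ⟨h1, h2 | h2⟩
    · exact horiz v v' h1 h2
    · obtain ⟨x, hx, z, hz, hxz⟩ := horiz v' v h1.symm h2
      exact ⟨z, hz, x, hx, hxz.symm⟩
    · exact vert v v' h1 h2
    · obtain ⟨x, hx, z, hz, hxz⟩ := vert v' v h1.symm h2
      exact ⟨z, hz, x, hx, hxz.symm⟩

end Core

section Glue

open Set

lemma swap_adj {m : ℕ} {p q : Fin m × Fin m} :
    (gridGraph m).Adj (Prod.swap p) (Prod.swap q) ↔ (gridGraph m).Adj p q := by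
  rw [grid_adj_iff, grid_adj_iff]
  simp only [Prod.fst_swap, Prod.snd_swap]
  constructor
  · rintro ⟨h1, h2⟩
    exact ⟨fun he => h1 (by rw [he]), by omega⟩
  · rintro ⟨h1, h2⟩
    exact ⟨fun he => h1 (Prod.swap_injective he), by omega⟩

lemma rooted_swap {m : ℕ} {W : Type*} {H : SimpleGraph W} {X : Set (Fin m × Fin m)}
    (h : HasRootedMinor (gridGraph m) X H) :
    HasRootedMinor (gridGraph m) (Prod.swap '' X) H := by
  obtain ⟨B, h1, h2, h3, h4⟩ := h
  refine ⟨fun w => Prod.swap '' B w, ?_, ?_, ?_, ?_⟩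
  · intro w
    obtain ⟨x, hx1, hx2⟩ := h1 w
    exact ⟨Prod.swap x, Set.mem_image_of_mem _ hx1, Set.mem_image_of_mem _ hx2⟩
  · intro w
    have hconn := h2 w
    refine SimpleGraph.Connected.map
      ⟨fun x => ⟨Prod.swap x.1, Set.mem_image_of_mem _ x.2⟩,
        fun hab => swap_adj.mpr hab⟩ ?_ hconn
    rintro ⟨q, p, hp, rfl⟩
    exact ⟨⟨p, hp⟩, Subtype.ext rfl⟩
  · intro w w' hne
    have hd := h3 w w' hne
    rw [Set.disjoint_left] at hd ⊢
    rintro a ⟨x, hx, rfl⟩ ⟨x', hx', hsw⟩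
    have hxx : x' = x := Prod.swap_injective hsw
    exact hd hx (hxx ▸ hx')
  · intro w w' ha
    obtain ⟨x, hx, z, hz, hxz⟩ := h4 w w' ha
    exact ⟨Prod.swap x, Set.mem_image_of_mem _ hx, Prod.swap z, Set.mem_image_of_mem _ hz,
      swap_adj.mpr hxz⟩

lemma select {m n : ℕ} (S : Set (Fin m × Fin m)) (h : n ≤ (Prod.snd '' S).ncard) :
    ∃ c y : Fin n → Fin m, StrictMono c ∧ ∀ k, ((y k, c k) : Fin m × Fin m) ∈ S := by
  have hfin : (Prod.snd '' S).Finite := Set.toFinite _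
  rw [Set.ncard_eq_toFinset_card _ hfin] at h
  obtain ⟨t, hts, htc⟩ := Finset.exists_subset_card_eq h
  have hmem : ∀ k : Fin n, ∃ a, a ∈ S ∧ Prod.snd a = t.orderEmbOfFin htc k := by
    intro k
    have h1 := hts (Finset.orderEmbOfFin_mem t htc k)
    rw [Set.Finite.mem_toFinset] at h1
    exact h1
  choose p hpS hpc using hmem
  refine ⟨fun k => t.orderEmbOfFin htc k, fun k => (p k).1,
    (t.orderEmbOfFin htc).strictMono, fun k => ?_⟩
  show ((p k).1, t.orderEmbOfFin htc k) ∈ S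
  rw [← hpc k, Prod.mk.eta]
  exact hpS k

lemma pigeon {m : ℕ} (S : Set (Fin m × Fin m)) (n : ℕ) (hn : n * n ≤ S.ncard) :
    n ≤ (Prod.fst '' S).ncard ∨ n ≤ (Prod.snd '' S).ncard := by
  by_contra hcon
  push_neg at hcon
  obtain ⟨h1, h2⟩ := hcon
  have hsub : S ⊆ (Prod.fst '' S) ×ˢ (Prod.snd '' S) := by
    intro p hp
    exact Set.mem_prod.mpr ⟨Set.mem_image_of_mem _ hp, Set.mem_image_of_mem _ hp⟩
  have hc1 : S.ncard ≤ ((Prod.fst '' S) ×ˢ (Prod.snd '' S)).ncard :=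
    Set.ncard_le_ncard hsub (Set.toFinite _)
  have hc2 : ((Prod.fst '' S) ×ˢ (Prod.snd '' S)).ncard
      = (Prod.fst '' S).ncard * (Prod.snd '' S).ncard := by
    rw [Set.ncard_eq_toFinset_card _ (Set.toFinite _),
        Set.ncard_eq_toFinset_card (Prod.fst '' S) (Set.toFinite _),
        Set.ncard_eq_toFinset_card (Prod.snd '' S) (Set.toFinite _),
        ← Finset.card_product, ← Set.Finite.toFinset_prod]
  have hlt : (Prod.fst '' S).ncard * (Prod.snd '' S).ncard < n * n :=
    Nat.mul_lt_mul'' h1 h2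
  omega

theorem grid_rooted_grid_minor' (m : ℕ) (S : Set (Fin m × Fin m))
    (hS : ∀ a ∈ S,
      Nat.sqrt (Nat.sqrt S.ncard) ≤ (a.1 : ℕ) ∧
        (a.1 : ℕ) < m - Nat.sqrt (Nat.sqrt S.ncard) ∧
      Nat.sqrt (Nat.sqrt S.ncard) ≤ (a.2 : ℕ) ∧
        (a.2 : ℕ) < m - Nat.sqrt (Nat.sqrt S.ncard)) :
    HasRootedMinor (gridGraph m) S (gridGraph (Nat.sqrt (Nat.sqrt S.ncard))) := by
  set ℓ := Nat.sqrt (Nat.sqrt S.ncard) with hldef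
  rcases Nat.eq_zero_or_pos ℓ with hl0 | hl
  · rw [hl0]
    exact ⟨fun _ => ∅, fun w => w.1.elim0, fun w => w.1.elim0,
      fun w => w.1.elim0, fun w => w.1.elim0⟩
  · have hmlt : 2 * ℓ < m := by
      have hpos : S.ncard ≠ 0 := by
        intro h
        rw [hldef, h, Nat.sqrt_zero, Nat.sqrt_zero] at hl
        omega
      obtain ⟨a, ha⟩ := Set.nonempty_of_ncard_ne_zero hpos
      have := hS a ha
      omega
    have hsq : ℓ * ℓ * (ℓ * ℓ) ≤ S.ncard := by
      have e1 : ℓ * ℓ ≤ Nat.sqrt S.ncard := Nat.sqrt_le (Nat.sqrt S.ncard)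
      have e2 := Nat.sqrt_le S.ncard
      calc ℓ * ℓ * (ℓ * ℓ) ≤ Nat.sqrt S.ncard * Nat.sqrt S.ncard := Nat.mul_le_mul e1 e1
      _ ≤ S.ncard := e2
    rcases pigeon S (ℓ * ℓ) hsq with hrow | hcol
    · have h2 : ℓ * ℓ ≤ (Prod.snd '' (Prod.swap '' S)).ncard := by
        rw [show Prod.snd '' (Prod.swap '' S) = Prod.fst '' S from by
          rw [Set.image_image]; rfl]
        exact hrow
      obtain ⟨c, yy, hcm, hmem⟩ := select (Prod.swap '' S) h2
      have hy : ∀ k, ℓ ≤ (yy k : ℕ) ∧ (yy k : ℕ) < m - ℓ := by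
        intro k
        obtain ⟨p, hp, hpe⟩ := hmem k
        have hb := hS p hp
        have he : p.2 = yy k := by
          have := congrArg Prod.fst hpe
          simpa using this
        rw [← he]
        exact ⟨hb.2.2.1, hb.2.2.2⟩
      have hcore := core hl hmlt c yy hcm hy (Prod.swap '' S) hmem
      have hres := rooted_swap hcore
      rw [show Prod.swap '' (Prod.swap '' S) = S from by
        rw [Set.image_image]; simp] at hres
      exact hres
    · obtain ⟨c, yy, hcm, hmem⟩ := select S hcol
      have hy : ∀ k, ℓ ≤ (yy k : ℕ) ∧ (yy k : ℕ) < m - ℓ := by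
        intro k
        have hb := hS _ (hmem k)
        exact ⟨hb.1, hb.2.1⟩
      exact core hl hmlt c yy hcm hy S hmem

end Glue
end GridAux



/-- if `S` is a set of vertices of the central
`(m - 2ℓ) × (m - 2ℓ)`-subgrid of the `(m × m)`-grid, where `ℓ = ⌊|S|^{1/4}⌋`, then the
`(m × m)`-grid contains the `(ℓ × ℓ)`-grid as an `S`-rooted minor. -/
theorem grid_rooted_grid_minor (m : ℕ) (S : Set (Fin m × Fin m))
    (hS : ∀ a ∈ S,
      Nat.sqrt (Nat.sqrt S.ncard) ≤ (a.1 : ℕ) ∧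
        (a.1 : ℕ) < m - Nat.sqrt (Nat.sqrt S.ncard) ∧
      Nat.sqrt (Nat.sqrt S.ncard) ≤ (a.2 : ℕ) ∧
        (a.2 : ℕ) < m - Nat.sqrt (Nat.sqrt S.ncard)) :
    HasRootedMinor (gridGraph m) S (gridGraph (Nat.sqrt (Nat.sqrt S.ncard))) :=
  GridAux.grid_rooted_grid_minor' m S hS
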